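/- (Theorem 2.1, formal power series form.) Let f and g be formal power series over ℝ, each with constant coefficient 0 and linear coefficient 1, satisfying the composition identity f(g(X)) + g(−f(X)) = 0 in ℝ⟦X⟧ (compositions are substitution of a power series with zero constant coefficient). If m > 1 is the smallest integer such that the coefficient of X^m in g is nonzero, then m is odd. Equivalently: for every even m > 1, if all coefficients of X^j in g vanish for 1 < j < m, then the coefficient of X^m in g also vanishes. -/

import Mathlib

/-- Composition (substitution) of formal power series over `ℝ`, by the standard
coefficient formula; it agrees with substitution when the inner series has zero
constant coefficient. -/
noncomputable def pscomp (f g : PowerSeries ℝ) : PowerSeries ℝ :=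
  PowerSeries.mk fun n =>
    ∑ k ∈ Finset.range (n + 1), PowerSeries.coeff (R := ℝ) k f * PowerSeries.coeff (R := ℝ) n (g ^ k)

private lemma coeff_pow_lt {h : PowerSeries ℝ}
    (h0 : PowerSeries.coeff (R := ℝ) 0 h = 0) :
    ∀ k j : ℕ, j < k → PowerSeries.coeff (R := ℝ) j (h ^ k) = 0 := by
  intro k
  induction k with
  | zero => intro j hj; omega
  | succ k ih =>
    intro j hj
    rw [pow_succ, PowerSeries.coeff_mul]
    apply Finset.sum_eq_zero
    intro p hp
    rw [Finset.HasAntidiagonal.mem_antidiagonal] at hp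
    rcases Nat.eq_zero_or_pos p.2 with h2 | h2
    · rw [h2, h0, mul_zero]
    · rw [ih p.1 (by omega), zero_mul]

private lemma coeff_pow_self {h : PowerSeries ℝ}
    (h0 : PowerSeries.coeff (R := ℝ) 0 h = 0) :
    ∀ k : ℕ, PowerSeries.coeff (R := ℝ) k (h ^ k) = (PowerSeries.coeff (R := ℝ) 1 h) ^ k := by
  intro k
  induction k with
  | zero => simp
  | succ k ih =>
    rw [pow_succ, PowerSeries.coeff_mul, Finset.sum_eq_single (k, 1)]
    · rw [ih, pow_succ]
    · intro b hb hbne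
      obtain ⟨p, q⟩ := b
      rw [Finset.HasAntidiagonal.mem_antidiagonal] at hb
      simp only at hb ⊢
      rcases Nat.eq_zero_or_pos q with rfl | h2
    
      · rw [h0, mul_zero]
      · have : p < k := by
          rcases Nat.lt_or_ge q 2 with h3 | h3
          · exfalso; apply hbne
            have hq : q = 1 := by omega
            have hp : p = k := by omega
            rw [hq, hp]
          · omega
        rw [coeff_pow_lt h0 k p this, zero_mul]
    · intro habs
      exact absurd (Finset.HasAntidiagonal.mem_antidiagonal.mpr (by omega)) habs

private lemma coeff_pow_g (g : PowerSeries ℝ) (m : ℕ) (hm : 1 < m)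
    (hg0 : PowerSeries.coeff (R := ℝ) 0 g = 0) (hg1 : PowerSeries.coeff (R := ℝ) 1 g = 1)
    (hmin : ∀ j : ℕ, 1 < j → j < m → PowerSeries.coeff (R := ℝ) j g = 0) :
    ∀ k : ℕ, 1 ≤ k → ∀ j : ℕ, j ≤ m →
      PowerSeries.coeff (R := ℝ) j (g ^ k) = (if j = k then 1 else 0) +
        (if k = 1 ∧ j = m then PowerSeries.coeff (R := ℝ) m g else 0) := by
  intro k hk
  induction k, hk using Nat.le_induction with
  | base =>
    intro j hj
    rw [pow_one]
    rcases eq_or_lt_of_le hj with rfl | hj'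
    · rw [if_neg (by omega), if_pos ⟨rfl, rfl⟩, zero_add]
    · rcases Nat.lt_or_ge j 2 with h2 | h2
      · interval_cases j
        · rw [hg0, if_neg (by omega), if_neg (by omega), add_zero]
        · rw [hg1, if_pos rfl, if_neg (by omega), add_zero]
      · rw [hmin j h2 hj', if_neg (by omega), if_neg (by omega), add_zero]
  | succ k hk ih =>
    intro j hj
    rcases Nat.eq_zero_or_pos j with rfl | hj0
    · rw [coeff_pow_lt hg0 (k + 1) 0 (by omega),
        if_neg (show ¬(0 = k + 1) by omega),
        if_neg (show ¬(k + 1 = 1 ∧ 0 = m) by omega), add_zero]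
    · rw [pow_succ, PowerSeries.coeff_mul, Finset.sum_eq_single (j - 1, 1)]
      · rw [ih (j - 1) (by omega), hg1, mul_one,
          if_neg (show ¬(k = 1 ∧ j - 1 = m) by omega), add_zero,
          if_neg (show ¬(k + 1 = 1 ∧ j = m) by omega), add_zero]
        by_cases hcase : j = k + 1
        · rw [if_pos (show j - 1 = k by omega), if_pos hcase]
        · rw [if_neg (show ¬(j - 1 = k) by omega), if_neg hcase]
      · intro b hb hbne
        obtain ⟨p, q⟩ := b
        rw [Finset.HasAntidiagonal.mem_antidiagonal] at hb
        simp only at hb ⊢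
        rcases Nat.eq_zero_or_pos q with rfl | hq0
        · rw [hg0, mul_zero]
        · rcases Nat.lt_or_ge q 2 with h3 | h3
          · exfalso; apply hbne
            have hq : q = 1 := by omega
            have hp : p = j - 1 := by omega
            rw [hq, hp]
          · rcases Nat.lt_or_ge q m with h4 | h4
            · rw [hmin q h3 h4, mul_zero]
            · have hqm : q = m := by omega
              have hp0 : p = 0 := by omega
              rw [hp0, coeff_pow_lt hg0 k 0 (by omega), zero_mul]
      · intro habs
        exact absurd (Finset.HasAntidiagonal.mem_antidiagonal.mpr (by omega)) habs

/-- Theorem 2.1, formal power series form: if `f` and `g` have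
zero constant term and unit linear term and satisfy `f(g(X)) + g(−f(X)) = 0`,
then the smallest `m > 1` with nonzero coefficient of `X^m` in `g` is odd. -/
theorem first_nonzero_coeff_odd (f g : PowerSeries ℝ)
    (hf0 : PowerSeries.coeff (R := ℝ) 0 f = 0) (hf1 : PowerSeries.coeff (R := ℝ) 1 f = 1)
    (hg0 : PowerSeries.coeff (R := ℝ) 0 g = 0) (hg1 : PowerSeries.coeff (R := ℝ) 1 g = 1)
    (hcomp : pscomp f g + pscomp g (-f) = 0)
    (m : ℕ) (hm : 1 < m) (hne : PowerSeries.coeff (R := ℝ) m g ≠ 0)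
    (hmin : ∀ j : ℕ, 1 < j → j < m → PowerSeries.coeff (R := ℝ) j g = 0) :
    Odd m := by
  by_contra hodd
  have hev : Even m := Nat.not_odd_iff_even.mp hodd
  set a := PowerSeries.coeff (R := ℝ) m g with ha
  have hle : PowerSeries.coeff (R := ℝ) m (pscomp f g) +
      PowerSeries.coeff (R := ℝ) m (pscomp g (-f)) = 0 := by
    rw [← map_add, hcomp, map_zero]
  have h1 : PowerSeries.coeff (R := ℝ) m (pscomp f g) = a + PowerSeries.coeff (R := ℝ) m f := by
    rw [pscomp, PowerSeries.coeff_mk]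
    have hterm : ∀ k ∈ Finset.range (m + 1),
        PowerSeries.coeff (R := ℝ) k f * PowerSeries.coeff (R := ℝ) m (g ^ k) =
        (if k = 1 then a else 0) + (if k = m then PowerSeries.coeff (R := ℝ) m f else 0) := by
      intro k hk
      rw [Finset.mem_range] at hk
      rcases Nat.eq_zero_or_pos k with rfl | hk1
      · rw [pow_zero, PowerSeries.coeff_one, if_neg (by omega), if_neg (by omega),
          if_neg (by omega), mul_zero, add_zero]
      · rw [coeff_pow_g g m hm hg0 hg1 hmin k hk1 m le_rfl]
        by_cases hk1' : k = 1
        · subst hk1'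
          rw [if_neg (by omega), if_pos ⟨rfl, rfl⟩, if_pos rfl, if_neg (by omega),
            hf1, add_zero, zero_add, one_mul, ← ha]
        · by_cases hkm : k = m
          · subst hkm
            rw [if_pos rfl, if_neg (by omega), if_neg hk1', if_pos rfl,
              add_zero, mul_one, zero_add]
          · rw [if_neg (show ¬(m = k) by omega), if_neg (show ¬(k = 1 ∧ m = m) by tauto),
              if_neg hk1', if_neg hkm, add_zero, mul_zero]
    rw [Finset.sum_congr rfl hterm, Finset.sum_add_distrib,
      Finset.sum_ite_eq' (Finset.range (m + 1)) 1 (fun _ => a),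
      Finset.sum_ite_eq' (Finset.range (m + 1)) m (fun _ => PowerSeries.coeff (R := ℝ) m f),
      if_pos (Finset.mem_range.mpr (by omega)),
      if_pos (Finset.mem_range.mpr (by omega))]
  have hnf0 : PowerSeries.coeff (R := ℝ) 0 (-f) = 0 := by rw [map_neg, hf0, neg_zero]
  have h2 : PowerSeries.coeff (R := ℝ) m (pscomp g (-f)) =
      -PowerSeries.coeff (R := ℝ) m f + a := by
    rw [pscomp, PowerSeries.coeff_mk]
    have hterm : ∀ k ∈ Finset.range (m + 1),
        PowerSeries.coeff (R := ℝ) k g * PowerSeries.coeff (R := ℝ) m ((-f) ^ k) =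
        (if k = 1 then -PowerSeries.coeff (R := ℝ) m f else 0) + (if k = m then a else 0) := by
      intro k hk
      rw [Finset.mem_range] at hk
      rcases Nat.eq_zero_or_pos k with rfl | hk1
      · rw [hg0, zero_mul, if_neg (by omega), if_neg (by omega), add_zero]
      · by_cases hk1' : k = 1
        · subst hk1'
          rw [pow_one, map_neg, hg1, one_mul, if_pos rfl, if_neg (by omega), add_zero]
        · by_cases hkm : k = m
          · subst hkm
            rw [coeff_pow_self hnf0 k, map_neg, hf1, if_neg hk1', if_pos rfl, zero_add]
            rw [hev.neg_one_pow, mul_one]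
          · rw [hmin k (by omega) (by omega), zero_mul, if_neg hk1', if_neg hkm,
              add_zero]
    rw [Finset.sum_congr rfl hterm, Finset.sum_add_distrib,
      Finset.sum_ite_eq' (Finset.range (m + 1)) 1
        (fun _ => -PowerSeries.coeff (R := ℝ) m f),
      Finset.sum_ite_eq' (Finset.range (m + 1)) m (fun _ => a),
      if_pos (Finset.mem_range.mpr (by omega)),
      if_pos (Finset.mem_range.mpr (by omega))]
  rw [h1, h2] at hle
  apply hne
  linarith
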